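/- Let G and H be locally compact Hausdorff topological groups acting freely and properly by automorphisms on the left and right, respectively, of a topological groupoid Γ, with commuting actions. Then the semidirect-product groupoid (Γ/H)⋊G (formed from the action t·(xH) = (t·x)H of G on the quotient groupoid Γ/H) acts freely and properly on the left of the space Γ, with fibre map ρ(y) = (r(y)·H, e), via (xH, t)·y = x(t·y) whenever s(x) = r(t·y). Freeness means that (xH, t)·y = y forces (xH, t) to be a unit of (Γ/H)⋊G, and properness means that the map ((xH,t), y) ↦ ((xH,t)·y, y) from the set of composable pairs to Γ × Γ is proper. -/

import Mathlib

open MeasureTheory Filter Topology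

/-- A topological groupoid: a space `Γ` with a set of units, continuous open range and
source maps onto the units, a (partially meaningful, totalized) continuous multiplication
defined for composable pairs, and a continuous inversion. -/
structure TopGroupoid (Γ : Type*) [TopologicalSpace Γ] where
  unit : Set Γ
  rng : Γ → Γ
  src : Γ → Γ
  mul : Γ → Γ → Γ
  inv : Γ → Γ
  rng_mem : ∀ x, rng x ∈ unit
  src_mem : ∀ x, src x ∈ unit
  rng_unit : ∀ u ∈ unit, rng u = u
  src_unit : ∀ u ∈ unit, src u = u
  continuous_rng : Continuous rng
  continuous_src : Continuous src
  open_rng : ∀ U : Set Γ, IsOpen U → ∃ V : Set Γ, IsOpen V ∧ rng '' U = V ∩ unit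
  open_src : ∀ U : Set Γ, IsOpen U → ∃ V : Set Γ, IsOpen V ∧ src '' U = V ∩ unit
  continuous_mul : ContinuousOn (fun p : Γ × Γ => mul p.1 p.2) {p : Γ × Γ | src p.1 = rng p.2}
  continuous_inv : Continuous inv
  rng_mul : ∀ x y, src x = rng y → rng (mul x y) = rng x
  src_mul : ∀ x y, src x = rng y → src (mul x y) = src y
  mul_assoc' : ∀ x y z, src x = rng y → src y = rng z → mul (mul x y) z = mul x (mul y z)
  rng_mul_self : ∀ x, mul (rng x) x = x
  mul_src_self : ∀ x, mul x (src x) = x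
  inv_inv' : ∀ x, inv (inv x) = x
  src_inv : ∀ x, src (inv x) = rng x
  rng_inv : ∀ x, rng (inv x) = src x
  inv_mul' : ∀ x, mul (inv x) x = src x
  mul_inv' : ∀ x, mul x (inv x) = rng x

section Actions

variable {Γ : Type*} [TopologicalSpace Γ]

/-- A (continuous) right action of a group `H` on a topological groupoid by automorphisms. -/
structure GroupRightAction (𝒢 : TopGroupoid Γ) (H : Type*) [TopologicalSpace H] [Group H] where
  act : Γ → H → Γ
  continuous_act : Continuous fun p : Γ × H => act p.1 p.2
  act_one : ∀ x, act x 1 = x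
  act_mul : ∀ x (h k : H), act (act x h) k = act x (h * k)
  unit_act : ∀ u ∈ 𝒢.unit, ∀ h : H, act u h ∈ 𝒢.unit
  src_act : ∀ x h, 𝒢.src (act x h) = act (𝒢.src x) h
  rng_act : ∀ x h, 𝒢.rng (act x h) = act (𝒢.rng x) h
  mul_act : ∀ x y h, 𝒢.src x = 𝒢.rng y → 𝒢.mul (act x h) (act y h) = act (𝒢.mul x y) h
  inv_act : ∀ x h, 𝒢.inv (act x h) = act (𝒢.inv x) h

namespace GroupRightAction

variable {𝒢 : TopGroupoid Γ} {H : Type*} [TopologicalSpace H] [Group H]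

/-- The action is free. -/
def Free (A : GroupRightAction 𝒢 H) : Prop := ∀ x h, A.act x h = x → h = 1

/-- The action is proper: `(x,h) ↦ (x·h, x)` has compact preimages of compact sets. -/
def Proper (A : GroupRightAction 𝒢 H) : Prop :=
  ∀ K : Set (Γ × Γ), IsCompact K → IsCompact {p : Γ × H | (A.act p.1 p.2, p.1) ∈ K}

/-- The orbit equivalence relation. -/
def setoid (A : GroupRightAction 𝒢 H) : Setoid Γ where
  r x y := ∃ h : H, A.act x h = y
  iseqv := by
    refine ⟨fun x => ⟨1, A.act_one x⟩, ?_, ?_⟩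
    · rintro x y ⟨h, rfl⟩
      exact ⟨h⁻¹, by rw [A.act_mul]; simp [A.act_one]⟩
    · rintro x y z ⟨h, rfl⟩ ⟨k, rfl⟩
      exact ⟨h * k, (A.act_mul x h k).symm⟩

end GroupRightAction

/-- A (continuous) left action of a group `G` on a topological groupoid by automorphisms. -/
structure GroupLeftAction (𝒢 : TopGroupoid Γ) (G : Type*) [TopologicalSpace G] [Group G] where
  act : G → Γ → Γ
  continuous_act : Continuous fun p : G × Γ => act p.1 p.2
  one_act : ∀ x, act 1 x = x
  act_act : ∀ (t u : G) (x : Γ), act t (act u x) = act (t * u) x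
  unit_act : ∀ u ∈ 𝒢.unit, ∀ t : G, act t u ∈ 𝒢.unit
  src_act : ∀ t x, 𝒢.src (act t x) = act t (𝒢.src x)
  rng_act : ∀ t x, 𝒢.rng (act t x) = act t (𝒢.rng x)
  mul_act : ∀ t x y, 𝒢.src x = 𝒢.rng y → 𝒢.mul (act t x) (act t y) = act t (𝒢.mul x y)
  inv_act : ∀ t x, 𝒢.inv (act t x) = act t (𝒢.inv x)

namespace GroupLeftAction

variable {𝒢 : TopGroupoid Γ} {G : Type*} [TopologicalSpace G] [Group G]

/-- The action is free. -/
def Free (A : GroupLeftAction 𝒢 G) : Prop := ∀ t x, A.act t x = x → t = 1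

/-- The action is proper: `(t,x) ↦ (t·x, x)` has compact preimages of compact sets. -/
def Proper (A : GroupLeftAction 𝒢 G) : Prop :=
  ∀ K : Set (Γ × Γ), IsCompact K → IsCompact {p : G × Γ | (A.act p.1 p.2, p.2) ∈ K}

/-- The orbit equivalence relation. -/
def setoid (A : GroupLeftAction 𝒢 G) : Setoid Γ where
  r x y := ∃ t : G, A.act t x = y
  iseqv := by
    refine ⟨fun x => ⟨1, A.one_act x⟩, ?_, ?_⟩
    · rintro x y ⟨t, rfl⟩
      exact ⟨t⁻¹, by rw [A.act_act]; simp [A.one_act]⟩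
    · rintro x y z ⟨t, rfl⟩ ⟨u, rfl⟩
      exact ⟨u * t, (A.act_act u t x).symm⟩

end GroupLeftAction

/-- A left action of a topological groupoid `𝒢` on a space `Ω`, with fibre map `ρ`. -/
structure GroupoidLeftAction (𝒢 : TopGroupoid Γ) (Ω : Type*) [TopologicalSpace Ω] where
  ρ : Ω → Γ
  act : Γ → Ω → Ω
  ρ_mem : ∀ u, ρ u ∈ 𝒢.unit
  continuous_ρ : Continuous ρ
  ρ_surj : ∀ v ∈ 𝒢.unit, ∃ u, ρ u = v
  open_ρ : ∀ U : Set Ω, IsOpen U → ∃ V : Set Γ, IsOpen V ∧ ρ '' U = V ∩ 𝒢.unit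
  continuous_act : ContinuousOn (fun p : Γ × Ω => act p.1 p.2) {p : Γ × Ω | 𝒢.src p.1 = ρ p.2}
  ρ_act : ∀ x u, 𝒢.src x = ρ u → ρ (act x u) = 𝒢.rng x
  unit_act : ∀ u, act (ρ u) u = u
  act_act : ∀ x y u, 𝒢.src y = ρ u → 𝒢.src x = 𝒢.rng y → act x (act y u) = act (𝒢.mul x y) u

namespace GroupoidLeftAction

variable {𝒢 : TopGroupoid Γ} {Ω : Type*} [TopologicalSpace Ω]

/-- The action is free. -/
def Free (A : GroupoidLeftAction 𝒢 Ω) : Prop :=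
  ∀ x u, 𝒢.src x = A.ρ u → A.act x u = u → x ∈ 𝒢.unit

/-- The action is proper: `(x,u) ↦ (x·u, u)` on the composable set has compact preimages of
compact sets. -/
def Proper (A : GroupoidLeftAction 𝒢 Ω) : Prop :=
  ∀ K : Set (Ω × Ω), IsCompact K →
    IsCompact {p : Γ × Ω | 𝒢.src p.1 = A.ρ p.2 ∧ (A.act p.1 p.2, p.2) ∈ K}

/-- The orbit equivalence relation on `Ω`. -/
def setoid (A : GroupoidLeftAction 𝒢 Ω) : Setoid Ω where
  r u v := ∃ x, 𝒢.src x = A.ρ u ∧ A.act x u = v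
  iseqv := by
    constructor
    · exact fun u => ⟨A.ρ u, 𝒢.src_unit _ (A.ρ_mem u), A.unit_act u⟩
    · rintro u v ⟨x, hx, rfl⟩
      refine ⟨𝒢.inv x, ?_, ?_⟩
      · rw [𝒢.src_inv, A.ρ_act x u hx]
      · rw [A.act_act _ x u hx (𝒢.src_inv x), 𝒢.inv_mul', hx, A.unit_act]
    · rintro u v w ⟨x, hx, rfl⟩ ⟨y, hy, rfl⟩
      have hyr : 𝒢.src y = 𝒢.rng x := by rw [hy, A.ρ_act x u hx]
      refine ⟨𝒢.mul y x, ?_, ?_⟩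
      · rw [𝒢.src_mul y x hyr, hx]
      · rw [← A.act_act y x u hx hyr]

end GroupoidLeftAction

/-- A right action of a topological groupoid `𝒢` on a space `Ω`, with fibre map `σ`. -/
structure GroupoidRightAction (𝒢 : TopGroupoid Γ) (Ω : Type*) [TopologicalSpace Ω] where
  σ : Ω → Γ
  act : Ω → Γ → Ω
  σ_mem : ∀ u, σ u ∈ 𝒢.unit
  continuous_σ : Continuous σ
  σ_surj : ∀ v ∈ 𝒢.unit, ∃ u, σ u = v
  open_σ : ∀ U : Set Ω, IsOpen U → ∃ V : Set Γ, IsOpen V ∧ σ '' U = V ∩ 𝒢.unit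
  continuous_act : ContinuousOn (fun p : Ω × Γ => act p.1 p.2) {p : Ω × Γ | σ p.1 = 𝒢.rng p.2}
  σ_act : ∀ u x, σ u = 𝒢.rng x → σ (act u x) = 𝒢.src x
  unit_act : ∀ u, act u (σ u) = u
  act_act : ∀ u x y, σ u = 𝒢.rng x → 𝒢.src x = 𝒢.rng y → act (act u x) y = act u (𝒢.mul x y)

namespace GroupoidRightAction

variable {𝒢 : TopGroupoid Γ} {Ω : Type*} [TopologicalSpace Ω]

/-- The action is free. -/
def Free (A : GroupoidRightAction 𝒢 Ω) : Prop :=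
  ∀ u x, A.σ u = 𝒢.rng x → A.act u x = u → x ∈ 𝒢.unit

/-- The action is proper. -/
def Proper (A : GroupoidRightAction 𝒢 Ω) : Prop :=
  ∀ K : Set (Ω × Ω), IsCompact K →
    IsCompact {p : Ω × Γ | A.σ p.1 = 𝒢.rng p.2 ∧ (A.act p.1 p.2, p.1) ∈ K}

/-- The orbit equivalence relation on `Ω`. -/
def setoid (A : GroupoidRightAction 𝒢 Ω) : Setoid Ω where
  r u v := ∃ x, A.σ u = 𝒢.rng x ∧ A.act u x = v
  iseqv := by
    constructor
    · exact fun u => ⟨A.σ u, (𝒢.rng_unit _ (A.σ_mem u)).symm, A.unit_act u⟩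
    · rintro u v ⟨x, hx, rfl⟩
      refine ⟨𝒢.inv x, ?_, ?_⟩
      · rw [𝒢.rng_inv, A.σ_act u x hx]
      · rw [A.act_act u x _ hx (𝒢.rng_inv x).symm, 𝒢.mul_inv', ← hx, A.unit_act]
    · rintro u v w ⟨x, hx, rfl⟩ ⟨y, hy, rfl⟩
      have hxy : 𝒢.src x = 𝒢.rng y := by rw [← A.σ_act u x hx, hy]
      refine ⟨𝒢.mul x y, ?_, ?_⟩
      · rw [𝒢.rng_mul x y hxy, hx]
      · rw [A.act_act u x y hx hxy]

end GroupoidRightAction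

end Actions

/-- A left Haar system on a topological groupoid: a family of Radon measures indexed by the
units, with support `r⁻¹(u)`, continuous in `u`, and left invariant. -/
def IsHaarSystem {Γ : Type*} [TopologicalSpace Γ] [MeasurableSpace Γ]
    (𝒢 : TopGroupoid Γ) (lam : Γ → Measure Γ) : Prop :=
  (∀ u ∈ 𝒢.unit, ∀ K : Set Γ, IsCompact K → lam u K < ⊤) ∧
  (∀ u ∈ 𝒢.unit, lam u {x | 𝒢.rng x ≠ u} = 0) ∧
  (∀ u ∈ 𝒢.unit, ∀ V : Set Γ, IsOpen V → (V ∩ 𝒢.rng ⁻¹' {u}).Nonempty → 0 < lam u V) ∧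
  (∀ f : Γ → ℝ, Continuous f → HasCompactSupport f →
    ContinuousOn (fun u => ∫ x, f x ∂(lam u)) 𝒢.unit) ∧
  (∀ x : Γ, ∀ f : Γ → ℝ, Continuous f → HasCompactSupport f →
    ∫ y, f (𝒢.mul x y) ∂(lam (𝒢.src x)) = ∫ y, f y ∂(lam (𝒢.rng x)))

section AuxSemidirect

open Set
open scoped Classical

variable {Γ : Type*} [TopologicalSpace Γ] {G : Type*} [TopologicalSpace G] [Group G]
  {H : Type*} [TopologicalSpace H] [Group H] {𝒢 : TopGroupoid Γ}

/-- The "translation" function for a right group action: `(u, u·h) ↦ h`. -/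
noncomputable def grTransl (RA : GroupRightAction 𝒢 H) (p : Γ × Γ) : H :=
  if h : ∃ k, RA.act p.1 k = p.2 then h.choose else 1

lemma grTransl_spec (RA : GroupRightAction 𝒢 H) {u v : Γ} (h : ∃ k, RA.act u k = v) :
    RA.act u (grTransl RA (u, v)) = v := by
  rw [grTransl, dif_pos h]; exact h.choose_spec


lemma grTransl_spec' (RA : GroupRightAction 𝒢 H) {p : Γ × Γ} (h : ∃ k, RA.act p.1 k = p.2) :
    RA.act p.1 (grTransl RA p) = p.2 := by
  obtain ⟨u, v⟩ := p
  exact grTransl_spec RA h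

lemma grAct_cancel (RA : GroupRightAction 𝒢 H) (hfree : RA.Free) {u : Γ} {h k : H}
    (e : RA.act u h = RA.act u k) : h = k := by
  have h1 : RA.act u (h * k⁻¹) = u := by
    rw [← RA.act_mul, e, RA.act_mul, mul_inv_cancel, RA.act_one]
  exact mul_inv_eq_one.mp (hfree _ _ h1)

lemma grTransl_continuousOn [T2Space Γ] [LocallyCompactSpace Γ]
    (RA : GroupRightAction 𝒢 H) (hfree : RA.Free) (hproper : RA.Proper) :
    ContinuousOn (grTransl RA) {p : Γ × Γ | ∃ k, RA.act p.1 k = p.2} := by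
  rintro ⟨u₀, v₀⟩ hp
  have hspec : RA.act u₀ (grTransl RA (u₀, v₀)) = v₀ := grTransl_spec RA hp
  rw [ContinuousWithinAt, tendsto_nhds]
  intro W hWo hWmem
  obtain ⟨N₁, hN₁c, hN₁⟩ := exists_compact_mem_nhds v₀
  obtain ⟨N₂, hN₂c, hN₂⟩ := exists_compact_mem_nhds u₀
  have hL : IsCompact {p : Γ × H | (RA.act p.1 p.2, p.1) ∈ N₁ ×ˢ N₂} :=
    hproper _ (hN₁c.prod hN₂c)
  set F := (Prod.snd '' {p : Γ × H | (RA.act p.1 p.2, p.1) ∈ N₁ ×ˢ N₂}) \ W with hF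
  have hFc : IsCompact F := (hL.image continuous_snd).diff hWo
  have key : ∀ h : H, h ∈ F → ∃ (U V : Set Γ) (W' : Set H),
      IsOpen U ∧ IsOpen V ∧ IsOpen W' ∧ u₀ ∈ U ∧ v₀ ∈ V ∧ h ∈ W' ∧
      ∀ u ∈ U, ∀ k ∈ W', RA.act u k ∉ V := by
    intro h hh
    have hne : RA.act u₀ h ≠ v₀ := by
      intro e
      exact hh.2 (by
        have : h = grTransl RA (u₀, v₀) := grAct_cancel RA hfree (by rw [e, hspec])
        rwa [this])
    obtain ⟨A, B, hAo, hBo, hA, hB, hAB⟩ := t2_separation hne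
    have hpre : IsOpen ((fun p : Γ × H => RA.act p.1 p.2) ⁻¹' A) :=
      hAo.preimage RA.continuous_act
    obtain ⟨U, W', hUo, hW'o, hU, hW', hsub⟩ := isOpen_prod_iff.1 hpre u₀ h hA
    refine ⟨U, B, W', hUo, hBo, hW'o, hU, hB, hW', ?_⟩
    intro u hu k hk hmem
    have hAmem : RA.act u k ∈ A := hsub (Set.mk_mem_prod hu hk)
    exact Set.disjoint_left.1 hAB hAmem hmem
  choose Uf Vf Wf hUo hVo hWo hu₀m hv₀m hhm hmiss using key
  have hcover : F ⊆ ⋃ i : F, Wf i.1 i.2 := fun h hh => Set.mem_iUnion.2 ⟨⟨h, hh⟩, hhm h hh⟩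
  obtain ⟨t, ht⟩ := hFc.elim_finite_subcover (fun i : F => Wf i.1 i.2) (fun i => hWo i.1 i.2) hcover
  set U' := interior N₂ ∩ ⋂ i ∈ t, Uf i.1 i.2 with hU'
  set V' := interior N₁ ∩ ⋂ i ∈ t, Vf i.1 i.2 with hV'
  have hU'mem : U' ∈ 𝓝 u₀ := by
    refine (isOpen_interior.inter (isOpen_biInter_finset fun i _ => hUo i.1 i.2)).mem_nhds ?_
    exact ⟨mem_interior_iff_mem_nhds.2 hN₂, Set.mem_iInter₂.2 fun i _ => hu₀m i.1 i.2⟩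
  have hV'mem : V' ∈ 𝓝 v₀ := by
    refine (isOpen_interior.inter (isOpen_biInter_finset fun i _ => hVo i.1 i.2)).mem_nhds ?_
    exact ⟨mem_interior_iff_mem_nhds.2 hN₁, Set.mem_iInter₂.2 fun i _ => hv₀m i.1 i.2⟩
  have hev : U' ×ˢ V' ∈ 𝓝[{p : Γ × Γ | ∃ k, RA.act p.1 k = p.2}] (u₀, v₀) :=
    nhdsWithin_le_nhds (prod_mem_nhds hU'mem hV'mem)
  filter_upwards [hev, self_mem_nhdsWithin] with p hpUV hpP
  obtain ⟨u, v⟩ := p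
  have hsp : RA.act u (grTransl RA (u, v)) = v := grTransl_spec RA hpP
  by_contra hnW
  have hmemF : grTransl RA (u, v) ∈ F := by
    refine ⟨⟨(u, grTransl RA (u, v)), ?_, rfl⟩, hnW⟩
    exact ⟨by rw [hsp]; exact interior_subset hpUV.2.1, interior_subset hpUV.1.1⟩
  obtain ⟨i, hit, hki⟩ := Set.mem_iUnion₂.1 (ht hmemF)
  refine hmiss i.1 i.2 u (Set.mem_iInter₂.1 hpUV.1.2 i hit) _ hki ?_
  rw [hsp]; exact Set.mem_iInter₂.1 hpUV.2.2 i hit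

lemma grMk_isOpenMap (RA : GroupRightAction 𝒢 H) : IsOpenMap (Quotient.mk RA.setoid) := by
  intro U hU
  have hpre : Quotient.mk RA.setoid ⁻¹' (Quotient.mk RA.setoid '' U)
      = ⋃ h : H, (fun x => RA.act x h) ⁻¹' U := by
    ext x
    simp only [Set.mem_preimage, Set.mem_image, Set.mem_iUnion]
    constructor
    · rintro ⟨y, hy, hxy⟩
      obtain ⟨k, hk⟩ := Quotient.exact hxy
      exact ⟨k⁻¹, by rw [← hk, RA.act_mul, mul_inv_cancel, RA.act_one]; exact hy⟩
    · rintro ⟨h, hh⟩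
      exact ⟨RA.act x h, hh,
        Quotient.sound ⟨h⁻¹, by rw [RA.act_mul, mul_inv_cancel, RA.act_one]⟩⟩
  have hq : IsQuotientMap (Quotient.mk RA.setoid) := isQuotientMap_quot_mk
  rw [← hq.isOpen_preimage, hpre]
  exact isOpen_iUnion fun h =>
    hU.preimage (RA.continuous_act.comp (continuous_id.prodMk continuous_const))

/-- The action of the semidirect product `(Γ/H) ⋊ G` on `Γ` (totalized). -/
noncomputable def spAct (𝒢 : TopGroupoid Γ) (LA : GroupLeftAction 𝒢 G)
    (RA : GroupRightAction 𝒢 H) (p : Quotient RA.setoid × G) (y : Γ) : Γ :=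
  if h : ∃ x, Quotient.mk RA.setoid x = p.1 ∧ 𝒢.src x = 𝒢.rng (LA.act p.2 y) then
    𝒢.mul h.choose (LA.act p.2 y) else y

lemma spAct_eq (𝒢 : TopGroupoid Γ) (LA : GroupLeftAction 𝒢 G) (RA : GroupRightAction 𝒢 H)
    (hRfree : RA.Free) (x : Γ) (t : G) (y : Γ) (hc : 𝒢.src x = 𝒢.rng (LA.act t y)) :
    spAct 𝒢 LA RA (Quotient.mk RA.setoid x, t) y = 𝒢.mul x (LA.act t y) := by
  have hex : ∃ x', Quotient.mk RA.setoid x' = (Quotient.mk RA.setoid x, t).1 ∧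
      𝒢.src x' = 𝒢.rng (LA.act (Quotient.mk RA.setoid x, t).2 y) := ⟨x, rfl, hc⟩
  rw [spAct, dif_pos hex]
  show 𝒢.mul hex.choose (LA.act t y) = 𝒢.mul x (LA.act t y)
  obtain ⟨hq, hs⟩ := hex.choose_spec
  have hq' : Quotient.mk RA.setoid hex.choose = Quotient.mk RA.setoid x := hq
  have hs' : 𝒢.src hex.choose = 𝒢.rng (LA.act t y) := hs
  obtain ⟨k, hk⟩ := Quotient.exact hq'
  have h1 : RA.act (𝒢.src hex.choose) k = 𝒢.src hex.choose := by
    rw [← RA.src_act, hk, hc]; exact hs'.symm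
  have hk1 : k = 1 := hRfree _ _ h1
  rw [hk1, RA.act_one] at hk
  rw [hk]

lemma spRep (𝒢 : TopGroupoid Γ) (LA : GroupLeftAction 𝒢 G) (RA : GroupRightAction 𝒢 H)
    (hcomm : ∀ (t : G) (x : Γ) (h : H), LA.act t (RA.act x h) = RA.act (LA.act t x) h)
    {x y : Γ} {t : G}
    (h : Quotient.mk RA.setoid (LA.act t⁻¹ (𝒢.src x)) = Quotient.mk RA.setoid (𝒢.rng y)) :
    ∃ x' : Γ, Quotient.mk RA.setoid x' = Quotient.mk RA.setoid x ∧
      𝒢.src x' = 𝒢.rng (LA.act t y) := by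
  obtain ⟨k, hk⟩ := Quotient.exact h
  refine ⟨RA.act x k, Quotient.sound ⟨k⁻¹, by rw [RA.act_mul, mul_inv_cancel, RA.act_one]⟩, ?_⟩
  have h1 : LA.act t⁻¹ (𝒢.src (RA.act x k)) = 𝒢.rng y := by
    rw [RA.src_act, hcomm]; exact hk
  have h2 := congrArg (LA.act t) h1
  rwa [LA.act_act, mul_inv_cancel, LA.one_act, ← LA.rng_act] at h2

end AuxSemidirect

/-- For commuting free and proper actions of `G` (left) and `H` (right)
on a groupoid `Γ`, the semidirect-product groupoid `(Γ/H)⋊G` acts freely and properly on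
the left of the space `Γ`, with fibre map `ρ(y) = (r(y)·H, e)`, via `(xH,t)·y = x(t·y)`
whenever `s(x) = r(t·y)`. -/
theorem semidirect_quotient_acts_freely_properly
    {Γ G H : Type*} [TopologicalSpace Γ] [T2Space Γ] [LocallyCompactSpace Γ]
    [TopologicalSpace G] [Group G] [IsTopologicalGroup G] [T2Space G] [LocallyCompactSpace G]
    [TopologicalSpace H] [Group H] [IsTopologicalGroup H] [T2Space H] [LocallyCompactSpace H]
    (𝒢 : TopGroupoid Γ)
    (LA : GroupLeftAction 𝒢 G) (RA : GroupRightAction 𝒢 H)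
    (hLfree : LA.Free) (hLproper : LA.Proper)
    (hRfree : RA.Free) (hRproper : RA.Proper)
    (hcomm : ∀ (t : G) (x : Γ) (h : H), LA.act t (RA.act x h) = RA.act (LA.act t x) h)
    (Q : TopGroupoid (Quotient RA.setoid))
    (hQunit : Q.unit = Quotient.mk RA.setoid '' 𝒢.unit)
    (hQrng : ∀ x : Γ, Q.rng (Quotient.mk RA.setoid x) = Quotient.mk RA.setoid (𝒢.rng x))
    (hQsrc : ∀ x : Γ, Q.src (Quotient.mk RA.setoid x) = Quotient.mk RA.setoid (𝒢.src x))
    (hQmul : ∀ x y : Γ, 𝒢.src x = 𝒢.rng y →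
      Q.mul (Quotient.mk RA.setoid x) (Quotient.mk RA.setoid y)
        = Quotient.mk RA.setoid (𝒢.mul x y))
    (hQinv : ∀ x : Γ, Q.inv (Quotient.mk RA.setoid x) = Quotient.mk RA.setoid (𝒢.inv x))
    (SP : TopGroupoid (Quotient RA.setoid × G))
    (hSPunit : SP.unit = (Quotient.mk RA.setoid '' 𝒢.unit) ×ˢ ({1} : Set G))
    (hSPrng : ∀ (x : Γ) (t : G),
      SP.rng (Quotient.mk RA.setoid x, t) = (Quotient.mk RA.setoid (𝒢.rng x), 1))
    (hSPsrc : ∀ (x : Γ) (t : G),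
      SP.src (Quotient.mk RA.setoid x, t) = (Quotient.mk RA.setoid (LA.act t⁻¹ (𝒢.src x)), 1))
    (hSPmul : ∀ (x y : Γ) (s t : G), 𝒢.src x = 𝒢.rng (LA.act s y) →
      SP.mul (Quotient.mk RA.setoid x, s) (Quotient.mk RA.setoid y, t)
        = (Quotient.mk RA.setoid (𝒢.mul x (LA.act s y)), s * t))
    (hSPinv : ∀ (x : Γ) (t : G),
      SP.inv (Quotient.mk RA.setoid x, t) = (Quotient.mk RA.setoid (LA.act t⁻¹ (𝒢.inv x)), t⁻¹)) :
    ∃ B : GroupoidLeftAction SP Γ,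
      (∀ y : Γ, B.ρ y = (Quotient.mk RA.setoid (𝒢.rng y), 1)) ∧
      (∀ (x : Γ) (t : G) (y : Γ), 𝒢.src x = 𝒢.rng (LA.act t y) →
        B.act (Quotient.mk RA.setoid x, t) y = 𝒢.mul x (LA.act t y)) ∧
      B.Free ∧ B.Proper := by
  classical
  -- abbreviation lemmas
  have hmkr : ∀ {a b : Γ}, Quotient.mk RA.setoid a = Quotient.mk RA.setoid b →
      Quotient.mk RA.setoid (𝒢.rng a) = Quotient.mk RA.setoid (𝒢.rng b) := by
    intro a b h
    obtain ⟨k, hk⟩ := Quotient.exact h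
    exact Quotient.sound ⟨k, by rw [← RA.rng_act, hk]⟩
  have hsrc_iff : ∀ (x : Γ) (t : G) (y : Γ), 𝒢.src x = 𝒢.rng (LA.act t y) →
      SP.src (Quotient.mk RA.setoid x, t) = (Quotient.mk RA.setoid (𝒢.rng y), 1) := by
    intro x t y h
    rw [hSPsrc]
    have h2 : LA.act t⁻¹ (𝒢.src x) = 𝒢.rng y := by
      rw [h, LA.rng_act, LA.act_act, inv_mul_cancel, LA.one_act]
    rw [h2]
  -- freeness
  have hfreeH : ∀ (x : Quotient RA.setoid × G) (u : Γ),
      SP.src x = (Quotient.mk RA.setoid (𝒢.rng u), 1) → spAct 𝒢 LA RA x u = u →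
      x ∈ SP.unit := by
    rintro ⟨q, t⟩ y hsrc hact
    obtain ⟨x, rfl⟩ := Quotient.exists_rep q
    rw [hSPsrc] at hsrc
    have h1 : Quotient.mk RA.setoid (LA.act t⁻¹ (𝒢.src x))
        = Quotient.mk RA.setoid (𝒢.rng y) := congrArg Prod.fst hsrc
    obtain ⟨x', hq, hs⟩ := spRep 𝒢 LA RA hcomm h1
    rw [← hq, spAct_eq 𝒢 LA RA hRfree _ _ _ hs] at hact
    have hsy : LA.act t (𝒢.src y) = 𝒢.src y := by
      conv_rhs => rw [← hact]
      rw [𝒢.src_mul _ _ hs, LA.src_act]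
    have ht : t = 1 := hLfree t _ hsy
    subst ht
    rw [LA.one_act] at hact hs
    have hassoc : 𝒢.mul (𝒢.mul x' y) (𝒢.inv y) = 𝒢.mul x' (𝒢.mul y (𝒢.inv y)) :=
      𝒢.mul_assoc' _ _ _ hs (𝒢.rng_inv y).symm
    rw [hact, 𝒢.mul_inv', ← hs, 𝒢.mul_src_self] at hassoc
    have hx' : x' ∈ 𝒢.unit := by rw [← hassoc]; exact 𝒢.src_mem x'
    rw [hSPunit]
    exact ⟨⟨x', hx', hq⟩, rfl⟩
  -- continuity of the action
  have hcont : ContinuousOn (fun p : (Quotient RA.setoid × G) × Γ => spAct 𝒢 LA RA p.1 p.2)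
      {p : (Quotient RA.setoid × G) × Γ |
        SP.src p.1 = (Quotient.mk RA.setoid (𝒢.rng p.2), 1)} := by
    set C := {p : (Quotient RA.setoid × G) × Γ |
      SP.src p.1 = (Quotient.mk RA.setoid (𝒢.rng p.2), 1)} with hC
    set π' : (Γ × G) × Γ → (Quotient RA.setoid × G) × Γ :=
      fun w => ((Quotient.mk RA.setoid w.1.1, w.1.2), w.2) with hπ'
    have hπ'c : Continuous π' :=
      ((continuous_quot_mk.comp (continuous_fst.comp continuous_fst)).prodMk
        (continuous_snd.comp continuous_fst)).prodMk continuous_snd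
    have hπ'o : IsOpenMap π' :=
      ((grMk_isOpenMap RA).prodMap IsOpenMap.id).prodMap IsOpenMap.id
    have hπ's : Function.Surjective π' := by
      rintro ⟨⟨q, t⟩, y⟩
      obtain ⟨x, rfl⟩ := Quotient.exists_rep q
      exact ⟨((x, t), y), rfl⟩
    set P := {p : Γ × Γ | ∃ k, RA.act p.1 k = p.2} with hP
    set g : (Γ × G) × Γ → Γ × Γ :=
      fun w => (LA.act w.1.2⁻¹ (𝒢.src w.1.1), 𝒢.rng w.2) with hg
    have hgc : Continuous g := by
      apply Continuous.prodMk
      · exact LA.continuous_act.comp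
          ((continuous_inv.comp (continuous_snd.comp continuous_fst)).prodMk
            (𝒢.continuous_src.comp (continuous_fst.comp continuous_fst)))
      · exact 𝒢.continuous_rng.comp continuous_snd
    set D := π' ⁻¹' C with hDdef
    have hD : D = g ⁻¹' P := by
      ext w
      show SP.src (Quotient.mk RA.setoid w.1.1, w.1.2)
          = (Quotient.mk RA.setoid (𝒢.rng w.2), 1)
        ↔ ∃ k, RA.act (LA.act w.1.2⁻¹ (𝒢.src w.1.1)) k = 𝒢.rng w.2
      rw [hSPsrc]
      constructor
      · intro h
        have h1 : Quotient.mk RA.setoid (LA.act w.1.2⁻¹ (𝒢.src w.1.1))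
            = Quotient.mk RA.setoid (𝒢.rng w.2) := congrArg Prod.fst h
        exact Quotient.exact h1
      · intro h
        rw [Prod.mk.injEq]
        exact ⟨Quotient.sound h, rfl⟩
    have hkey : ∀ w ∈ D,
        𝒢.src (RA.act w.1.1 (grTransl RA (g w))) = 𝒢.rng (LA.act w.1.2 w.2) := by
      intro w hw
      have hex : ∃ k, RA.act (g w).1 k = (g w).2 := by rw [hD] at hw; exact hw
      have hsp : RA.act (g w).1 (grTransl RA (g w)) = (g w).2 := grTransl_spec' RA hex
      have hsp2 : RA.act (LA.act w.1.2⁻¹ (𝒢.src w.1.1)) (grTransl RA (g w)) = 𝒢.rng w.2 := hsp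
      have h3 : LA.act w.1.2⁻¹ (𝒢.src (RA.act w.1.1 (grTransl RA (g w)))) = 𝒢.rng w.2 := by
        rw [RA.src_act, hcomm]; exact hsp2
      have h4 := congrArg (LA.act w.1.2) h3
      rwa [LA.act_act, mul_inv_cancel, LA.one_act, ← LA.rng_act] at h4
    have htrc : ContinuousOn (fun w => grTransl RA (g w)) D := by
      rw [hD]
      exact (grTransl_continuousOn RA hRfree hRproper).comp hgc.continuousOn
        (Set.mapsTo_preimage g P)
    have hpairc : ContinuousOn
        (fun w : (Γ × G) × Γ => (RA.act w.1.1 (grTransl RA (g w)), LA.act w.1.2 w.2)) D := by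
      apply ContinuousOn.prodMk
      · exact RA.continuous_act.comp_continuousOn
          (ContinuousOn.prodMk (continuous_fst.comp continuous_fst).continuousOn htrc)
      · exact (LA.continuous_act.comp
          ((continuous_snd.comp continuous_fst).prodMk continuous_snd)).continuousOn
    have hΦc : ContinuousOn (fun w : (Γ × G) × Γ =>
        𝒢.mul (RA.act w.1.1 (grTransl RA (g w))) (LA.act w.1.2 w.2)) D := by
      refine 𝒢.continuous_mul.comp hpairc ?_
      intro w hw
      exact hkey w hw
    have hcomp : ∀ w ∈ D, spAct 𝒢 LA RA (π' w).1 (π' w).2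
        = 𝒢.mul (RA.act w.1.1 (grTransl RA (g w))) (LA.act w.1.2 w.2) := by
      intro w hw
      have hkw := hkey w hw
      have hqw : Quotient.mk RA.setoid (RA.act w.1.1 (grTransl RA (g w)))
          = Quotient.mk RA.setoid w.1.1 :=
        Quotient.sound ⟨(grTransl RA (g w))⁻¹, by rw [RA.act_mul, mul_inv_cancel, RA.act_one]⟩
      show spAct 𝒢 LA RA (Quotient.mk RA.setoid w.1.1, w.1.2) w.2 = _
      rw [← hqw]
      exact spAct_eq 𝒢 LA RA hRfree _ _ _ hkw
    rw [continuousOn_iff']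
    intro W hWo
    obtain ⟨U2, hU2o, hU2⟩ := continuousOn_iff'.1 hΦc W hWo
    refine ⟨π' '' U2, hπ'o _ hU2o, ?_⟩
    ext p
    simp only [Set.mem_inter_iff, Set.mem_preimage, Set.mem_image]
    constructor
    · rintro ⟨hpW, hpC⟩
      obtain ⟨w, rfl⟩ := hπ's p
      have hwD : w ∈ D := hpC
      have hwΦ : w ∈ (fun w : (Γ × G) × Γ =>
          𝒢.mul (RA.act w.1.1 (grTransl RA (g w))) (LA.act w.1.2 w.2)) ⁻¹' W ∩ D := by
        refine ⟨?_, hwD⟩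
        show 𝒢.mul (RA.act w.1.1 (grTransl RA (g w))) (LA.act w.1.2 w.2) ∈ W
        rw [← hcomp w hwD]
        exact hpW
      rw [hU2] at hwΦ
      exact ⟨⟨w, hwΦ.1, rfl⟩, hpC⟩
    · rintro ⟨⟨w, hwU2, rfl⟩, hpC⟩
      have hwD : w ∈ D := hpC
      have hwΦ : w ∈ (fun w : (Γ × G) × Γ =>
          𝒢.mul (RA.act w.1.1 (grTransl RA (g w))) (LA.act w.1.2 w.2)) ⁻¹' W ∩ D := by
        rw [hU2]; exact ⟨hwU2, hwD⟩
      refine ⟨?_, hpC⟩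
      show spAct 𝒢 LA RA (π' w).1 (π' w).2 ∈ W
      rw [hcomp w hwD]
      exact hwΦ.1
  -- properness
  have hproperH : ∀ K : Set (Γ × Γ), IsCompact K → IsCompact
      {p : (Quotient RA.setoid × G) × Γ |
        SP.src p.1 = (Quotient.mk RA.setoid (𝒢.rng p.2), 1)
        ∧ (spAct 𝒢 LA RA p.1 p.2, p.2) ∈ K} := by
    intro K hK
    set St := {w : (Γ × G) × Γ | 𝒢.src w.1.1 = 𝒢.rng (LA.act w.1.2 w.2)
      ∧ (𝒢.mul w.1.1 (LA.act w.1.2 w.2), w.2) ∈ K} with hSt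
    have hmulc : ContinuousOn (fun w : (Γ × G) × Γ =>
        (𝒢.mul w.1.1 (LA.act w.1.2 w.2), w.2))
        {w : (Γ × G) × Γ | 𝒢.src w.1.1 = 𝒢.rng (LA.act w.1.2 w.2)} := by
      have hpairm : ContinuousOn (fun w : (Γ × G) × Γ => (w.1.1, LA.act w.1.2 w.2))
          {w : (Γ × G) × Γ | 𝒢.src w.1.1 = 𝒢.rng (LA.act w.1.2 w.2)} :=
        ContinuousOn.prodMk (continuous_fst.comp continuous_fst).continuousOn
          (LA.continuous_act.comp
            ((continuous_snd.comp continuous_fst).prodMk continuous_snd)).continuousOn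
      apply ContinuousOn.prodMk
      · exact 𝒢.continuous_mul.comp hpairm (fun w hw => hw)
      · exact continuous_snd.continuousOn
    have hD₀closed : IsClosed {w : (Γ × G) × Γ | 𝒢.src w.1.1 = 𝒢.rng (LA.act w.1.2 w.2)} := by
      apply isClosed_eq
      · exact 𝒢.continuous_src.comp (continuous_fst.comp continuous_fst)
      · exact 𝒢.continuous_rng.comp (LA.continuous_act.comp
          ((continuous_snd.comp continuous_fst).prodMk continuous_snd))
    have hStclosed : IsClosed St := by
      have h := hmulc.preimage_isClosed_of_isClosed hD₀closed hK.isClosed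
      convert h using 1
      rfl
    have hK₁ : IsCompact (Prod.fst '' K) := hK.image continuous_fst
    have hK₂ : IsCompact (Prod.snd '' K) := hK.image continuous_snd
    have hKs : IsCompact ((𝒢.src '' (Prod.fst '' K)) ×ˢ (𝒢.src '' (Prod.snd '' K))) :=
      (hK₁.image 𝒢.continuous_src).prod (hK₂.image 𝒢.continuous_src)
    have hTL := hLproper _ hKs
    have hT : IsCompact (Prod.fst '' {p : G × Γ |
        (LA.act p.1 p.2, p.2) ∈ (𝒢.src '' (Prod.fst '' K)) ×ˢ (𝒢.src '' (Prod.snd '' K))}) :=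
      hTL.image continuous_fst
    set T := Prod.fst '' {p : G × Γ |
      (LA.act p.1 p.2, p.2) ∈ (𝒢.src '' (Prod.fst '' K)) ×ˢ (𝒢.src '' (Prod.snd '' K))} with hTdef
    set E' := ((Prod.fst '' K) ×ˢ (T ×ˢ (Prod.snd '' K)))
      ∩ {w : Γ × (G × Γ) | 𝒢.src w.1 = 𝒢.src (LA.act w.2.1 w.2.2)} with hE'
    have hE'c : IsCompact E' := (hK₁.prod (hT.prod hK₂)).inter_right (isClosed_eq
      (𝒢.continuous_src.comp continuous_fst)
      (𝒢.continuous_src.comp (LA.continuous_act.comp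
        ((continuous_fst.comp continuous_snd).prodMk (continuous_snd.comp continuous_snd)))))
    set φ : Γ × (G × Γ) → (Γ × G) × Γ :=
      fun w => ((𝒢.mul w.1 (𝒢.inv (LA.act w.2.1 w.2.2)), w.2.1), w.2.2) with hφ
    have hφc : ContinuousOn φ E' := by
      have hpairφ : ContinuousOn (fun w : Γ × (G × Γ) => (w.1, 𝒢.inv (LA.act w.2.1 w.2.2))) E' :=
        ContinuousOn.prodMk continuous_fst.continuousOn
          (𝒢.continuous_inv.comp (LA.continuous_act.comp
            ((continuous_fst.comp continuous_snd).prodMk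
              (continuous_snd.comp continuous_snd)))).continuousOn
      have hmapsφ : Set.MapsTo (fun w : Γ × (G × Γ) => (w.1, 𝒢.inv (LA.act w.2.1 w.2.2))) E'
          {p : Γ × Γ | 𝒢.src p.1 = 𝒢.rng p.2} := by
        intro w hw
        show 𝒢.src w.1 = 𝒢.rng (𝒢.inv (LA.act w.2.1 w.2.2))
        rw [𝒢.rng_inv]
        exact hw.2
      apply ContinuousOn.prodMk
      · apply ContinuousOn.prodMk
        · exact 𝒢.continuous_mul.comp hpairφ hmapsφ
        · exact (continuous_fst.comp continuous_snd).continuousOn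
      · exact (continuous_snd.comp continuous_snd).continuousOn
    have hφE : IsCompact (φ '' E') := hE'c.image_of_continuousOn hφc
    have hsub : St ⊆ φ '' E' := by
      rintro ⟨⟨x, t⟩, y⟩ ⟨hs, hKm⟩
      have hz₁ : 𝒢.mul x (LA.act t y) ∈ Prod.fst '' K :=
        ⟨(𝒢.mul x (LA.act t y), y), hKm, rfl⟩
      have hy₂ : y ∈ Prod.snd '' K := ⟨(𝒢.mul x (LA.act t y), y), hKm, rfl⟩
      have htm : t ∈ T := by
        refine ⟨(t, 𝒢.src y), ⟨?_, ?_⟩, rfl⟩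
        · show LA.act t (𝒢.src y) ∈ 𝒢.src '' (Prod.fst '' K)
          rw [← LA.src_act]
          exact ⟨𝒢.mul x (LA.act t y), hz₁, by rw [𝒢.src_mul _ _ hs]⟩
        · exact ⟨y, hy₂, rfl⟩
      have hcond : 𝒢.src (𝒢.mul x (LA.act t y)) = 𝒢.src (LA.act t y) := 𝒢.src_mul _ _ hs
      refine ⟨(𝒢.mul x (LA.act t y), (t, y)), ⟨⟨hz₁, htm, hy₂⟩, hcond⟩, ?_⟩
      show ((𝒢.mul (𝒢.mul x (LA.act t y)) (𝒢.inv (LA.act t y)), t), y) = ((x, t), y)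
      have hassoc : 𝒢.mul (𝒢.mul x (LA.act t y)) (𝒢.inv (LA.act t y))
          = 𝒢.mul x (𝒢.mul (LA.act t y) (𝒢.inv (LA.act t y))) :=
        𝒢.mul_assoc' _ _ _ hs (𝒢.rng_inv _).symm
      rw [hassoc, 𝒢.mul_inv', ← hs, 𝒢.mul_src_self]
    have hStc : IsCompact St := hφE.of_isClosed_subset hStclosed hsub
    have himg : {p : (Quotient RA.setoid × G) × Γ |
        SP.src p.1 = (Quotient.mk RA.setoid (𝒢.rng p.2), 1)
        ∧ (spAct 𝒢 LA RA p.1 p.2, p.2) ∈ K}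
        = (fun w : (Γ × G) × Γ => ((Quotient.mk RA.setoid w.1.1, w.1.2), w.2)) '' St := by
      ext p
      constructor
      · rintro ⟨hsrc, hKm⟩
        obtain ⟨⟨q, t⟩, y⟩ := p
        obtain ⟨x, rfl⟩ := Quotient.exists_rep q
        rw [hSPsrc] at hsrc
        have h1 : Quotient.mk RA.setoid (LA.act t⁻¹ (𝒢.src x))
            = Quotient.mk RA.setoid (𝒢.rng y) := congrArg Prod.fst hsrc
        obtain ⟨x', hq, hs⟩ := spRep 𝒢 LA RA hcomm h1
        refine ⟨((x', t), y), ⟨hs, ?_⟩, ?_⟩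
        · have heq : spAct 𝒢 LA RA (Quotient.mk RA.setoid x, t) y
              = 𝒢.mul x' (LA.act t y) := by
            rw [← hq]; exact spAct_eq 𝒢 LA RA hRfree _ _ _ hs
          rwa [heq] at hKm
        · show ((Quotient.mk RA.setoid x', t), y) = ((Quotient.mk RA.setoid x, t), y)
          rw [hq]
      · rintro ⟨⟨⟨x, t⟩, y⟩, ⟨hs, hKm⟩, rfl⟩
        refine ⟨hsrc_iff x t y hs, ?_⟩
        show (spAct 𝒢 LA RA (Quotient.mk RA.setoid x, t) y, y) ∈ K
        rw [spAct_eq 𝒢 LA RA hRfree _ _ _ hs]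
        exact hKm
    rw [himg]
    exact hStc.image (((continuous_quot_mk.comp (continuous_fst.comp continuous_fst)).prodMk
      (continuous_snd.comp continuous_fst)).prodMk continuous_snd)
  refine ⟨{ ρ := fun y => (Quotient.mk RA.setoid (𝒢.rng y), 1)
            act := spAct 𝒢 LA RA
            ρ_mem := ?_
            continuous_ρ := ?_
            ρ_surj := ?_
            open_ρ := ?_
            continuous_act := hcont
            ρ_act := ?_
            unit_act := ?_
            act_act := ?_ },
    fun y => rfl, fun x t y h => spAct_eq 𝒢 LA RA hRfree x t y h, hfreeH, hproperH⟩
  · -- ρ_mem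
    intro u
    rw [hSPunit]
    exact ⟨⟨𝒢.rng u, 𝒢.rng_mem u, rfl⟩, rfl⟩
  · -- continuous_ρ
    exact (continuous_quot_mk.comp 𝒢.continuous_rng).prodMk continuous_const
  · -- ρ_surj
    intro v hv
    rw [hSPunit] at hv
    obtain ⟨u, hu, h1⟩ := hv.1
    refine ⟨u, ?_⟩
    show (Quotient.mk RA.setoid (𝒢.rng u), (1 : G)) = v
    have h2 : v.2 = 1 := hv.2
    rw [𝒢.rng_unit u hu, h1]
    exact Prod.ext rfl h2.symm
  · -- open_ρ
    intro U hU
    obtain ⟨V₀, hV₀o, hV₀⟩ := 𝒢.open_rng U hU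
    refine ⟨(Quotient.mk RA.setoid '' V₀) ×ˢ (Set.univ : Set G),
      (grMk_isOpenMap RA V₀ hV₀o).prod isOpen_univ, ?_⟩
    rw [hSPunit]
    ext p
    constructor
    · rintro ⟨y, hy, rfl⟩
      have hry : 𝒢.rng y ∈ V₀ ∩ 𝒢.unit := by rw [← hV₀]; exact ⟨y, hy, rfl⟩
      exact ⟨⟨⟨𝒢.rng y, hry.1, rfl⟩, trivial⟩, ⟨𝒢.rng y, hry.2, rfl⟩, rfl⟩
    · rintro ⟨⟨⟨v, hv, hveq⟩, -⟩, ⟨u, hu, hueq⟩, hp2⟩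
      obtain ⟨k, hk⟩ := Quotient.exact (hueq.trans hveq.symm)
      have hvunit : v ∈ 𝒢.unit := by rw [← hk]; exact RA.unit_act u hu k
      have hvmem : v ∈ 𝒢.rng '' U := by rw [hV₀]; exact ⟨hv, hvunit⟩
      obtain ⟨y, hyU, hry⟩ := hvmem
      refine ⟨y, hyU, ?_⟩
      show (Quotient.mk RA.setoid (𝒢.rng y), (1 : G)) = p
      have h2 : p.2 = 1 := hp2
      rw [hry, hveq]
      exact Prod.ext rfl h2.symm
  · -- ρ_act
    rintro ⟨q, t⟩ y h
    obtain ⟨x, rfl⟩ := Quotient.exists_rep q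
    rw [hSPsrc] at h
    have h1 : Quotient.mk RA.setoid (LA.act t⁻¹ (𝒢.src x))
        = Quotient.mk RA.setoid (𝒢.rng y) := congrArg Prod.fst h
    obtain ⟨x', hq, hs⟩ := spRep 𝒢 LA RA hcomm h1
    show (Quotient.mk RA.setoid (𝒢.rng (spAct 𝒢 LA RA (Quotient.mk RA.setoid x, t) y)), (1 : G))
        = SP.rng (Quotient.mk RA.setoid x, t)
    rw [← hq, spAct_eq 𝒢 LA RA hRfree x' t y hs, hSPrng, 𝒢.rng_mul x' _ hs]
  · -- unit_act
    intro y
    have hc : 𝒢.src (𝒢.rng y) = 𝒢.rng (LA.act 1 y) := by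
      rw [LA.one_act, 𝒢.src_unit _ (𝒢.rng_mem y)]
    show spAct 𝒢 LA RA (Quotient.mk RA.setoid (𝒢.rng y), 1) y = y
    rw [spAct_eq 𝒢 LA RA hRfree _ _ _ hc, LA.one_act, 𝒢.rng_mul_self]
  · -- act_act
    rintro ⟨q₁, s⟩ ⟨q₂, t⟩ y h2 h12
    obtain ⟨x₂, rfl⟩ := Quotient.exists_rep q₂
    obtain ⟨x₁, rfl⟩ := Quotient.exists_rep q₁
    rw [hSPsrc] at h2
    have h2' : Quotient.mk RA.setoid (LA.act t⁻¹ (𝒢.src x₂))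
        = Quotient.mk RA.setoid (𝒢.rng y) := congrArg Prod.fst h2
    obtain ⟨x₂', hq₂, hs₂⟩ := spRep 𝒢 LA RA hcomm h2'
    have hact2 : spAct 𝒢 LA RA (Quotient.mk RA.setoid x₂, t) y = 𝒢.mul x₂' (LA.act t y) := by
      rw [← hq₂]; exact spAct_eq 𝒢 LA RA hRfree _ _ _ hs₂
    have hrv : 𝒢.rng (𝒢.mul x₂' (LA.act t y)) = 𝒢.rng x₂' := 𝒢.rng_mul _ _ hs₂
    have hmkr₂ : Quotient.mk RA.setoid (𝒢.rng x₂') = Quotient.mk RA.setoid (𝒢.rng x₂) :=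
      hmkr hq₂
    rw [hSPsrc, hSPrng] at h12
    have hfst : Quotient.mk RA.setoid (LA.act s⁻¹ (𝒢.src x₁))
        = Quotient.mk RA.setoid (𝒢.rng x₂) := congrArg Prod.fst h12
    have h12' : Quotient.mk RA.setoid (LA.act s⁻¹ (𝒢.src x₁))
        = Quotient.mk RA.setoid (𝒢.rng (𝒢.mul x₂' (LA.act t y))) := by
      rw [hrv, hmkr₂]; exact hfst
    obtain ⟨x₁', hq₁, hs₁⟩ := spRep 𝒢 LA RA hcomm h12'
    have hLHS : spAct 𝒢 LA RA (Quotient.mk RA.setoid x₁, s)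
        (spAct 𝒢 LA RA (Quotient.mk RA.setoid x₂, t) y)
        = 𝒢.mul x₁' (LA.act s (𝒢.mul x₂' (LA.act t y))) := by
      rw [hact2, ← hq₁]
      exact spAct_eq 𝒢 LA RA hRfree _ _ _ hs₁
    have hcomp : 𝒢.src x₁' = 𝒢.rng (LA.act s x₂') := by
      rw [hs₁, LA.rng_act, hrv, ← LA.rng_act]
    have hRmul : SP.mul (Quotient.mk RA.setoid x₁, s) (Quotient.mk RA.setoid x₂, t)
        = (Quotient.mk RA.setoid (𝒢.mul x₁' (LA.act s x₂')), s * t) := by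
      rw [← hq₁, ← hq₂]
      exact hSPmul x₁' x₂' s t hcomp
    have hcomp2 : 𝒢.src (𝒢.mul x₁' (LA.act s x₂')) = 𝒢.rng (LA.act (s * t) y) := by
      rw [𝒢.src_mul _ _ hcomp, LA.src_act, hs₂]
      rw [← LA.act_act s t y, LA.rng_act s (LA.act t y)]
    have hRHS : spAct 𝒢 LA RA (Quotient.mk RA.setoid (𝒢.mul x₁' (LA.act s x₂')), s * t) y
        = 𝒢.mul (𝒢.mul x₁' (LA.act s x₂')) (LA.act (s * t) y) :=
      spAct_eq 𝒢 LA RA hRfree _ _ _ hcomp2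
    show spAct 𝒢 LA RA (Quotient.mk RA.setoid x₁, s)
        (spAct 𝒢 LA RA (Quotient.mk RA.setoid x₂, t) y)
        = spAct 𝒢 LA RA (SP.mul (Quotient.mk RA.setoid x₁, s) (Quotient.mk RA.setoid x₂, t)) y
    rw [hLHS, hRmul, hRHS]
    have hmid : 𝒢.src (LA.act s x₂') = 𝒢.rng (LA.act s (LA.act t y)) := by
      rw [LA.src_act, hs₂, LA.rng_act s (LA.act t y)]
    rw [← LA.act_act s t y, ← LA.mul_act s x₂' (LA.act t y) hs₂,
      ← 𝒢.mul_assoc' x₁' (LA.act s x₂') (LA.act s (LA.act t y)) hcomp hmid]
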